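/- For nontrivial, surjective, monotone, output-rough (J,K) games u and w on n players, the influence measure φ satisfies the transfer axiom: φ_i(u) + φ_i(w) = φ_i(u ∨ w) + φ_i(u ∧ w) for every player i. -/

import Mathlib

open Finset

/-- The set of still-possible outcomes after the first `h` players (according to `π`,
player `l` being called at position `π l`, 0-indexed) have declared votes from `a`. -/
def reach {n : ℕ} {J : Type*} [Fintype J] [DecidableEq J]
    (v : (Fin n → J) → ℤ) (π : Equiv.Perm (Fin n)) (a : Fin n → J) (h : ℕ) : Finset ℤ :=
  (Finset.univ.filter (fun a' : Fin n → J => ∀ l, (π l : ℕ) < h → a' l = a l)).image v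

/-- Output-roughness: every reachable-outcome set is an integer interval. -/
def OutputRough {n : ℕ} {J : Type*} [Fintype J] [DecidableEq J]
    (v : (Fin n → J) → ℤ) : Prop :=
  ∀ (a : Fin n → J) (π : Equiv.Perm (Fin n)) (h : ℕ),
    ∃ α β : ℤ, reach v π a h = Finset.Icc α β

/-- `τ` for player `i` (at 1-indexed position `π i + 1`). -/
def tau {n : ℕ} {J : Type*} [Fintype J] [DecidableEq J]
    (v : (Fin n → J) → ℤ) (π : Equiv.Perm (Fin n)) (a : Fin n → J) (i : Fin n) : ℕ :=
  (reach v π a (π i)).card - (reach v π a ((π i : ℕ) + 1)).card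

/-- The influence measure `φ_i` of Definition 3.2. -/
noncomputable def phi {n : ℕ} {J : Type*} [Fintype J] [DecidableEq J]
    (v : (Fin n → J) → ℤ) (i : Fin n) : ℝ :=
  (1 / ((n.factorial : ℝ) * (Fintype.card J : ℝ) ^ n *
      (((Finset.univ.image v).card : ℝ) - 1))) *
    ∑ π : Equiv.Perm (Fin n), ∑ a : Fin n → J, (tau v π a i : ℝ)

section Transfer

variable {n : ℕ} {J : Type*} [Fintype J] [LinearOrder J]

/-- bottom element of `J` -/
def jbot (J : Type*) [Fintype J] [LinearOrder J] [Nonempty J] : J :=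
  Finset.univ.min' Finset.univ_nonempty

def jtop (J : Type*) [Fintype J] [LinearOrder J] [Nonempty J] : J :=
  Finset.univ.max' Finset.univ_nonempty

lemma jbot_le [Nonempty J] (j : J) : jbot J ≤ j := Finset.min'_le _ _ (mem_univ _)
lemma le_jtop [Nonempty J] (j : J) : j ≤ jtop J := Finset.le_max' _ _ (mem_univ _)

variable [Nonempty J]

def loF (π : Equiv.Perm (Fin n)) (a : Fin n → J) (h : ℕ) : Fin n → J :=
  fun l => if (π l : ℕ) < h then a l else jbot J

def hiF (π : Equiv.Perm (Fin n)) (a : Fin n → J) (h : ℕ) : Fin n → J :=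
  fun l => if (π l : ℕ) < h then a l else jtop J

lemma mem_reach (v : (Fin n → J) → ℤ) (π : Equiv.Perm (Fin n)) (a : Fin n → J) (h : ℕ)
    {a' : Fin n → J} (ha' : ∀ l, (π l : ℕ) < h → a' l = a l) : v a' ∈ reach v π a h :=
  Finset.mem_image_of_mem v (by simpa using ha')

lemma loF_cond (π : Equiv.Perm (Fin n)) (a : Fin n → J) (h : ℕ) :
    ∀ l, (π l : ℕ) < h → loF π a h l = a l := fun l hl => if_pos hl

lemma hiF_cond (π : Equiv.Perm (Fin n)) (a : Fin n → J) (h : ℕ) :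
    ∀ l, (π l : ℕ) < h → hiF π a h l = a l := fun l hl => if_pos hl

lemma reach_bounds {v : (Fin n → J) → ℤ} (hm : Monotone v) {π : Equiv.Perm (Fin n)}
    {a : Fin n → J} {h : ℕ} {x : ℤ} (hx : x ∈ reach v π a h) :
    v (loF π a h) ≤ x ∧ x ≤ v (hiF π a h) := by
  obtain ⟨a', ha', rfl⟩ := Finset.mem_image.mp hx
  simp only [Finset.mem_filter, Finset.mem_univ, true_and] at ha'
  constructor
  · apply hm
    intro l
    by_cases hl : (π l : ℕ) < h
    · simp [loF, hl, ha' l hl]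
    · simp only [loF, if_neg hl]; exact jbot_le _
  · apply hm
    intro l
    by_cases hl : (π l : ℕ) < h
    · simp [hiF, hl, ha' l hl]
    · simp only [hiF, if_neg hl]; exact le_jtop _

/-- reach of a monotone output-rough game is the interval between its extreme completions -/
lemma reach_eq_Icc_of_rough {v : (Fin n → J) → ℤ} (hm : Monotone v) (hr : OutputRough v)
    (π : Equiv.Perm (Fin n)) (a : Fin n → J) (h : ℕ) :
    reach v π a h = Finset.Icc (v (loF π a h)) (v (hiF π a h)) := by
  obtain ⟨α, β, hαβ⟩ := hr a π h
  have hlo : v (loF π a h) ∈ reach v π a h := mem_reach v π a h (loF_cond π a h)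
  have hhi : v (hiF π a h) ∈ reach v π a h := mem_reach v π a h (hiF_cond π a h)
  have h1 : α ≤ v (loF π a h) ∧ v (loF π a h) ≤ β := Finset.mem_Icc.mp (hαβ ▸ hlo)
  have h2 : α ≤ v (hiF π a h) ∧ v (hiF π a h) ≤ β := Finset.mem_Icc.mp (hαβ ▸ hhi)
  have h3 : α ∈ reach v π a h := by
    rw [hαβ]; exact Finset.mem_Icc.mpr ⟨le_rfl, h1.1.trans h1.2⟩
  have h4 : β ∈ reach v π a h := by
    rw [hαβ]; exact Finset.mem_Icc.mpr ⟨h2.1.trans h2.2, le_rfl⟩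
  have h5 : v (loF π a h) ≤ α := (reach_bounds hm h3).1
  have h6 : β ≤ v (hiF π a h) := (reach_bounds hm h4).2
  rw [hαβ, le_antisymm h1.1 h5, le_antisymm h6 h2.2]

/-- single-step Lipschitz property -/
def LipStep {n : ℕ} {J : Type*} [Fintype J] [LinearOrder J] (v : (Fin n → J) → ℤ) : Prop :=
  ∀ (a : Fin n → J) (l : Fin n) (j j' : J), j < j' → (∀ t : J, j < t → t < j' → False) →
    v (Function.update a l j') ≤ v (Function.update a l j) + 1

lemma update_le_update (a : Fin n → J) (l : Fin n) {j j' : J} (h : j ≤ j') :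
    Function.update a l j ≤ Function.update a l j' := by
  intro m
  rcases eq_or_ne m l with rfl | hne
  · simp [h]
  · simp [Function.update_of_ne hne]

lemma lip_of_rough (hn : 1 ≤ n) {v : (Fin n → J) → ℤ} (hm : Monotone v)
    (hr : OutputRough v) : LipStep v := by
  intro a l j j' hjj' hadj
  by_contra hcon
  push_neg at hcon
  set el : Fin n := ⟨n - 1, by omega⟩ with hel
  set π := Equiv.swap l el with hπ
  have hcc : ∀ m : Fin n, ((π m : ℕ) < n - 1) ↔ m ≠ l := by
    intro m
    have hv : ((π m : ℕ) < n - 1) ↔ π m ≠ el := by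
      have h1 := (π m).isLt
      constructor
      · intro hlt e; rw [e] at hlt; simp [hel] at hlt
      · intro hne
        have : (π m : ℕ) ≠ n - 1 := fun e => hne (Fin.ext (by simp [hel, e]))
        omega
    rw [hv]
    constructor
    · intro hne e; exact hne (by rw [hπ, e, Equiv.swap_apply_left])
    · intro hne e
      apply hne
      have : m = π.symm el := (Equiv.apply_eq_iff_eq_symm_apply π).mp e
      rw [this, hπ, Equiv.symm_swap, Equiv.swap_apply_right]
  have hlo : loF π a (n - 1) = Function.update a l (jbot J) := by
    funext m
    rcases eq_or_ne m l with rfl | hne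
    · simp only [loF, if_neg (fun hc => (hcc m).mp hc rfl), Function.update_self]
    · simp only [loF, if_pos ((hcc m).mpr hne), Function.update_of_ne hne]
  have hhi : hiF π a (n - 1) = Function.update a l (jtop J) := by
    funext m
    rcases eq_or_ne m l with rfl | hne
    · simp only [hiF, if_neg (fun hc => (hcc m).mp hc rfl), Function.update_self]
    · simp only [hiF, if_pos ((hcc m).mpr hne), Function.update_of_ne hne]
  have hIcc := reach_eq_Icc_of_rough hm hr π a (n - 1)
  set γ : ℤ := v (Function.update a l j) + 1 with hγ
  have hγmem : γ ∈ reach v π a (n - 1) := by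
    rw [hIcc, hlo, hhi, Finset.mem_Icc]
    constructor
    · have := hm (update_le_update a l (jbot_le j))
      omega
    · have := hm (update_le_update a l (le_jtop j'))
      omega
  obtain ⟨a', ha', hva'⟩ := Finset.mem_image.mp hγmem
  simp only [Finset.mem_filter, Finset.mem_univ, true_and] at ha'
  have ha'eq : a' = Function.update a l (a' l) := by
    funext m
    rcases eq_or_ne m l with rfl | hne
    · simp
    · rw [Function.update_of_ne hne]
      exact ha' m ((hcc m).mpr hne)
  rcases le_or_gt (a' l) j with hle | hlt
  · have : v a' ≤ v (Function.update a l j) := by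
      rw [ha'eq]; exact hm (update_le_update a l hle)
    omega
  · rcases le_or_gt j' (a' l) with hle2 | hlt2
    · have : v (Function.update a l j') ≤ v a' := by
        rw [ha'eq]; exact hm (update_le_update a l hle2)
      omega
    · exact hadj (a' l) hlt hlt2

/-- Discrete IVT: reach of a monotone step-Lipschitz game is an interval -/
lemma reach_eq_Icc_of_lip {v : (Fin n → J) → ℤ} (hm : Monotone v) (hlip : LipStep v)
    (π : Equiv.Perm (Fin n)) (a : Fin n → J) (h : ℕ) :
    reach v π a h = Finset.Icc (v (loF π a h)) (v (hiF π a h)) := by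
  ext x
  rw [Finset.mem_Icc]
  constructor
  · exact fun hx => reach_bounds hm hx
  · rintro ⟨hx1, hx2⟩
    suffices H : ∀ (k : ℕ) (y : Fin n → J),
        (∑ m, (Finset.univ.filter (fun t => t < y m)).card) ≤ k →
        (∀ l, (π l : ℕ) < h → y l = a l) → x ≤ v y → x ∈ reach v π a h by
      exact H _ (hiF π a h) le_rfl (hiF_cond π a h) hx2
    intro k
    induction k using Nat.strong_induction_on with
    | _ k ih =>
      intro y hmy hy hxy
      by_cases hxe : v y = x
      · exact hxe ▸ mem_reach v π a h hy
      have hxlt : x < v y := lt_of_le_of_ne hxy (fun e => hxe e.symm)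
      have hyne : y ≠ loF π a h := by
        rintro rfl; omega
      obtain ⟨l, hl⟩ := Function.ne_iff.mp hyne
      have hfree : ¬ ((π l : ℕ) < h) := by
        intro hc; exact hl (by rw [hy l hc, loF, if_pos hc])
      have hlol : loF π a h l = jbot J := if_neg hfree
      have hjlt : jbot J < y l := by
        rcases lt_or_eq_of_le (jbot_le (y l)) with h' | h'
        · exact h'
        · exact absurd (hlol.trans h').symm hl
      set T := Finset.univ.filter (fun t => t < y l) with hT
      have hTne : T.Nonempty := ⟨jbot J, by simp [hT, hjlt]⟩
      set j := T.max' hTne with hj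
      have hjmem : j ∈ T := T.max'_mem hTne
      have hjy : j < y l := (Finset.mem_filter.mp hjmem).2
      set y' := Function.update y l j with hy'
      have hy'mem : ∀ m, (π m : ℕ) < h → y' m = a m := by
        intro m hmh
        have hne : m ≠ l := fun e => hfree (e ▸ hmh)
        rw [hy', Function.update_of_ne hne]
        exact hy m hmh
      have hstep : v y ≤ v y' + 1 := by
        have hadj : ∀ t : J, j < t → t < y l → False := by
          intro t h1 h2
          have : t ∈ T := by simp [hT, h2]
          exact absurd (T.le_max' t this) (not_le.mpr h1)
        have := hlip y' l j (y l) hjy hadj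
        rwa [hy', Function.update_idem, Function.update_eq_self,
          Function.update_idem] at this
      have hms : (∑ m, (Finset.univ.filter (fun t => t < y' m)).card) <
          ∑ m, (Finset.univ.filter (fun t => t < y m)).card := by
        apply Finset.sum_lt_sum
        · intro m _
          rcases eq_or_ne m l with rfl | hne
          · apply Finset.card_le_card
            intro t ht
            simp only [Finset.mem_filter, Finset.mem_univ, true_and] at ht ⊢
            rw [hy', Function.update_self] at ht
            exact ht.trans hjy
          · rw [hy', Function.update_of_ne hne]
        · refine ⟨l, Finset.mem_univ l, ?_⟩
          apply Finset.card_lt_card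
          constructor
          · intro t ht
            simp only [Finset.mem_filter, Finset.mem_univ, true_and] at ht ⊢
            rw [hy', Function.update_self] at ht
            exact ht.trans hjy
          · intro hsub
            have : j ∈ Finset.univ.filter (fun t => t < y' l) := hsub (by simpa using hjy)
            simp only [Finset.mem_filter, Finset.mem_univ, true_and, hy',
              Function.update_self] at this
            exact lt_irrefl j this
      exact ih _ (by omega) y' le_rfl hy'mem (by omega)

lemma loF_le_hiF (π : Equiv.Perm (Fin n)) (a : Fin n → J) (h : ℕ) :
    loF π a h ≤ hiF π a h := by
  intro l
  by_cases hl : (π l : ℕ) < h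
  · simp [loF, hiF, hl]
  · simp only [loF, hiF, if_neg hl]
    exact jbot_le (jtop J)

lemma loF_mono (π : Equiv.Perm (Fin n)) (a : Fin n → J) (h : ℕ) :
    loF π a h ≤ loF π a (h + 1) := by
  intro l
  by_cases hl : (π l : ℕ) < h
  · simp [loF, hl, Nat.lt_succ_of_lt hl]
  · by_cases hl2 : (π l : ℕ) < h + 1
    · simp only [loF, if_neg hl, if_pos hl2]; exact jbot_le _
    · simp [loF, hl, hl2]

lemma hiF_anti (π : Equiv.Perm (Fin n)) (a : Fin n → J) (h : ℕ) :
    hiF π a (h + 1) ≤ hiF π a h := by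
  intro l
  by_cases hl : (π l : ℕ) < h
  · simp [hiF, hl, Nat.lt_succ_of_lt hl]
  · by_cases hl2 : (π l : ℕ) < h + 1
    · simp only [hiF, if_neg hl, if_pos hl2]; exact le_jtop _
    · simp [hiF, hl, hl2]

lemma tau_cast {v : (Fin n → J) → ℤ} (hm : Monotone v)
    (π : Equiv.Perm (Fin n)) (a : Fin n → J)
    (hIcc : ∀ h, reach v π a h = Finset.Icc (v (loF π a h)) (v (hiF π a h)))
    (i : Fin n) :
    (tau v π a i : ℤ) =
      (v (hiF π a (π i)) - v (loF π a (π i))) -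
      (v (hiF π a ((π i : ℕ) + 1)) - v (loF π a ((π i : ℕ) + 1))) := by
  have h1 : v (loF π a (π i)) ≤ v (loF π a ((π i : ℕ) + 1)) := hm (loF_mono π a _)
  have h2 : v (hiF π a ((π i : ℕ) + 1)) ≤ v (hiF π a (π i)) := hm (hiF_anti π a _)
  have h3 : v (loF π a (π i)) ≤ v (hiF π a (π i)) := hm (loF_le_hiF π a _)
  have h4 : v (loF π a ((π i : ℕ) + 1)) ≤ v (hiF π a ((π i : ℕ) + 1)) :=
    hm (loF_le_hiF π a _)
  unfold tau
  rw [hIcc, hIcc, Int.card_Icc, Int.card_Icc]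
  omega

end Transfer

section Transfer2
variable {n : ℕ} {J : Type*} [Fintype J] [LinearOrder J]

lemma reach_zero (v : (Fin n → J) → ℤ) (π : Equiv.Perm (Fin n)) (a : Fin n → J) :
    reach v π a 0 = Finset.univ.image v := by
  unfold reach
  rw [Finset.filter_true_of_mem]
  intro x _ l hl
  omega

lemma lip_max {u w : (Fin n → J) → ℤ} (hu : LipStep u) (hw : LipStep w) :
    LipStep (fun a => max (u a) (w a)) := by
  intro a l j j' h1 h2
  have hu' := hu a l j j' h1 h2
  have hw' := hw a l j j' h1 h2
  simp only []
  refine max_le (hu'.trans ?_) (hw'.trans ?_)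
  · exact add_le_add_left (le_max_left _ _) 1
  · exact add_le_add_left (le_max_right _ _) 1

lemma lip_min {u w : (Fin n → J) → ℤ} (hu : LipStep u) (hw : LipStep w) :
    LipStep (fun a => min (u a) (w a)) := by
  intro a l j j' h1 h2
  have hu' := hu a l j j' h1 h2
  have hw' := hw a l j j' h1 h2
  simp only []
  rcases min_cases (u (Function.update a l j)) (w (Function.update a l j)) with
    ⟨he, _⟩ | ⟨he, _⟩ <;> rw [he]
  · exact (min_le_left _ _).trans hu'
  · exact (min_le_right _ _).trans hw'

end Transfer2



/-- Lemma 5.2 (transfer axiom): for nontrivial, surjective, monotone, output-rough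
games `u` and `w`, `φ_i(u) + φ_i(w) = φ_i(u ∨ w) + φ_i(u ∧ w)` for every player `i`. -/
theorem phi_transfer {n : ℕ} {J : Type*} [Fintype J] [LinearOrder J]
    (K : Finset ℤ) (hK : 2 ≤ K.card)
    (u w : (Fin n → J) → ℤ)
    (hum : Monotone u) (hwm : Monotone w)
    (husurj : Finset.univ.image u = K) (hwsurj : Finset.univ.image w = K)
    (hur : OutputRough u) (hwr : OutputRough w) (i : Fin n) :
    phi u i + phi w i =
      phi (fun a => max (u a) (w a)) i + phi (fun a => min (u a) (w a)) i := by
  -- nondegeneracy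
  have hcard2 : 2 ≤ Fintype.card (Fin n → J) := by
    calc 2 ≤ K.card := hK
    _ = (Finset.univ.image u).card := by rw [husurj]
    _ ≤ (Finset.univ : Finset (Fin n → J)).card := Finset.card_image_le
    _ = Fintype.card (Fin n → J) := rfl
  have hcardfun : Fintype.card (Fin n → J) = Fintype.card J ^ n := by
    rw [Fintype.card_fun, Fintype.card_fin]
  have h1 : 2 ≤ Fintype.card J ^ n := hcardfun ▸ hcard2
  have hn : 1 ≤ n := by
    rcases Nat.eq_zero_or_pos n with rfl | h
    · simp at h1
    · exact h
  haveI hJ : Nonempty J := by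
    rcases Nat.eq_zero_or_pos (Fintype.card J) with hc | hc
    · rw [hc, Nat.zero_pow (by omega)] at h1; omega
    · exact Fintype.card_pos_iff.mp hc
  -- monotonicity and Lipschitz of all four games
  have hVm : Monotone (fun a => max (u a) (w a)) :=
    fun x y hxy => max_le_max (hum hxy) (hwm hxy)
  have hMm : Monotone (fun a => min (u a) (w a)) :=
    fun x y hxy => min_le_min (hum hxy) (hwm hxy)
  have hulip := lip_of_rough hn hum hur
  have hwlip := lip_of_rough hn hwm hwr
  have hVlip := lip_max hulip hwlip
  have hMlip := lip_min hulip hwlip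
  have hIccU := reach_eq_Icc_of_rough hum hur
  have hIccW := reach_eq_Icc_of_rough hwm hwr
  have hIccV := reach_eq_Icc_of_lip hVm hVlip
  have hIccM := reach_eq_Icc_of_lip hMm hMlip
  -- image identification
  have hlo0 : ∀ (π : Equiv.Perm (Fin n)) (a : Fin n → J),
      loF π a 0 = (fun _ => jbot J : Fin n → J) := by
    intro π a; funext l; simp [loF]
  have hhi0 : ∀ (π : Equiv.Perm (Fin n)) (a : Fin n → J),
      hiF π a 0 = (fun _ => jtop J : Fin n → J) := by
    intro π a; funext l; simp [hiF]
  have himg : ∀ (v : (Fin n → J) → ℤ),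
      (∀ (π : Equiv.Perm (Fin n)) (a : Fin n → J) (h : ℕ),
        reach v π a h = Finset.Icc (v (loF π a h)) (v (hiF π a h))) →
      Finset.univ.image v =
        Finset.Icc (v (fun _ => jbot J)) (v (fun _ => jtop J)) := by
    intro v hIcc
    rw [← reach_zero v 1 (fun _ => jbot J), hIcc, hlo0, hhi0]
  have hKu : K = Finset.Icc (u (fun _ => jbot J)) (u (fun _ => jtop J)) := by
    rw [← husurj, himg u hIccU]
  have hKw : K = Finset.Icc (w (fun _ => jbot J)) (w (fun _ => jtop J)) := by
    rw [← hwsurj, himg w hIccW]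
  have hubotK : u (fun _ => jbot J) ∈ K := by
    rw [← husurj]; exact Finset.mem_image_of_mem u (Finset.mem_univ _)
  have hutopK : u (fun _ => jtop J) ∈ K := by
    rw [← husurj]; exact Finset.mem_image_of_mem u (Finset.mem_univ _)
  have hwbotK : w (fun _ => jbot J) ∈ K := by
    rw [← hwsurj]; exact Finset.mem_image_of_mem w (Finset.mem_univ _)
  have hwtopK : w (fun _ => jtop J) ∈ K := by
    rw [← hwsurj]; exact Finset.mem_image_of_mem w (Finset.mem_univ _)
  have hbot : u (fun _ => jbot J) = w (fun _ => jbot J) := by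
    have h1 := (Finset.mem_Icc.mp (hKu ▸ hwbotK)).1
    have h2 := (Finset.mem_Icc.mp (hKw ▸ hubotK)).1
    omega
  have htop : u (fun _ => jtop J) = w (fun _ => jtop J) := by
    have h1 := (Finset.mem_Icc.mp (hKu ▸ hwtopK)).2
    have h2 := (Finset.mem_Icc.mp (hKw ▸ hutopK)).2
    omega
  have hKV : Finset.univ.image (fun a => max (u a) (w a)) = K := by
    rw [himg _ hIccV, hKu]
    congr 1
    · simp only [← hbot, max_self]
    · simp only [← htop, max_self]
  have hKM : Finset.univ.image (fun a => min (u a) (w a)) = K := by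
    rw [himg _ hIccM, hKu]
    congr 1
    · simp only [← hbot, min_self]
    · simp only [← htop, min_self]
  -- assemble
  unfold phi
  rw [husurj, hwsurj, hKV, hKM, ← mul_add, ← mul_add]
  congr 1
  rw [← Finset.sum_add_distrib, ← Finset.sum_add_distrib]
  refine Finset.sum_congr rfl fun π _ => ?_
  rw [← Finset.sum_add_distrib, ← Finset.sum_add_distrib]
  refine Finset.sum_congr rfl fun a _ => ?_
  have h1 := tau_cast hum π a (fun h => hIccU π a h) i
  have h2 := tau_cast hwm π a (fun h => hIccW π a h) i
  have h3 := tau_cast hVm π a (fun h => hIccV π a h) i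
  have h4 := tau_cast hMm π a (fun h => hIccM π a h) i
  have key : (tau u π a i : ℤ) + (tau w π a i : ℤ) =
      (tau (fun a => max (u a) (w a)) π a i : ℤ) +
      (tau (fun a => min (u a) (w a)) π a i : ℤ) := by
    rw [h1, h2, h3, h4]
    have m1 := max_add_min (u (hiF π a (π i))) (w (hiF π a (π i)))
    have m2 := max_add_min (u (loF π a (π i))) (w (loF π a (π i)))
    have m3 := max_add_min (u (hiF π a ((π i : ℕ) + 1))) (w (hiF π a ((π i : ℕ) + 1)))
    have m4 := max_add_min (u (loF π a ((π i : ℕ) + 1))) (w (loF π a ((π i : ℕ) + 1)))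
    omega
  exact_mod_cast key
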